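/- Let (Ω, 𝔉, μ) be a probability space, (E_m)_{m≥1} an i.i.d. sequence of exponential random variables with rate 1, and W = (2/π²) Σ_{m=1}^∞ E_m/(2m−1)². Then for every t ≥ 0, the moment generating function of W satisfies E[e^{−tW}] = 1/cosh(√(t/2)). -/

import Mathlib

open MeasureTheory ProbabilityTheory Real

open Set ENNReal NNReal Filter Finset

section Aux

lemma pg_exp_mgf_aux {s : ℝ} (hs : 0 ≤ s) :
    ∫ x, Real.exp (-(s * x)) ∂(expMeasure 1) = 1 / (1 + s) := by
  have hmeas : Measurable (fun x => (exponentialPDFReal 1 x).toNNReal) :=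
    (measurable_exponentialPDFReal 1).real_toNNReal
  rw [show expMeasure 1 = volume.withDensity
      (fun x => ((exponentialPDFReal 1 x).toNNReal : ℝ≥0∞)) from rfl]
  rw [integral_withDensity_eq_integral_smul hmeas]
  have h1 : ∀ x : ℝ, (exponentialPDFReal 1 x).toNNReal • Real.exp (-(s * x))
      = Set.indicator (Ici (0:ℝ)) (fun x => Real.exp (-((1 + s) * x))) x := by
    intro x
    have hnn := exponentialPDFReal_nonneg one_pos x
    rw [NNReal.smul_def, Real.coe_toNNReal _ hnn, smul_eq_mul]
    rcases lt_or_ge x 0 with hx | hx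
    · rw [Set.indicator_of_notMem (by simpa using hx.not_ge)]
      rw [exponentialPDFReal, gammaPDFReal, if_neg (not_le.mpr hx), zero_mul]
    · rw [Set.indicator_of_mem (Set.mem_Ici.mpr hx), exponentialPDFReal, gammaPDFReal, if_pos hx]
      simp only [Real.rpow_one, Real.Gamma_one, div_one, sub_self, Real.rpow_zero, one_mul,
        mul_one]
      rw [← Real.exp_add]
      ring_nf
  simp_rw [h1]
  rw [integral_indicator measurableSet_Ici, MeasureTheory.integral_Ici_eq_integral_Ioi]
  have hb : (0:ℝ) < 1 + s := by linarith
  have h2 := integral_exp_neg_mul_rpow (p := 1) (b := 1 + s) one_pos hb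
  simp only [Real.rpow_one] at h2
  rw [show (fun x => Real.exp (-((1+s)*x))) = fun x => Real.exp (-(1+s)*x) by ext x; ring_nf]
  rw [h2, show (-1)/(1:ℝ) = -1 by norm_num, Real.rpow_neg_one,
    show (1:ℝ)/1 + 1 = 2 by norm_num, Real.Gamma_two, mul_one, one_div]

lemma pg_prod_range_two_mul (g : ℕ → ℂ) (n : ℕ) :
    ∏ j ∈ Finset.range (2 * n), g j
      = (∏ k ∈ Finset.range n, g (2 * k)) * ∏ k ∈ Finset.range n, g (2 * k + 1) := by
  induction n with
  | zero => simp
  | succ n ih =>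
    rw [show 2 * (n + 1) = (2 * n + 1) + 1 by ring, Finset.prod_range_succ,
      Finset.prod_range_succ, ih, Finset.prod_range_succ, Finset.prod_range_succ]
    ring

lemma pg_cosh_prod_tendsto {t : ℝ} (ht : 0 < t) :
    Filter.Tendsto (fun n => ∏ k ∈ Finset.range n, (1 + (2 * t / π ^ 2) / (2 * (k : ℝ) + 1) ^ 2))
      atTop (nhds (Real.cosh (Real.sqrt (t / 2)))) := by
  set r := Real.sqrt (t / 2) with hr
  have hrpos : 0 < r := Real.sqrt_pos.mpr (by linarith)
  have hr2 : r ^ 2 = t / 2 := Real.sq_sqrt (by linarith)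
  have hπ : (π : ℂ) ≠ 0 := Complex.ofReal_ne_zero.mpr Real.pi_ne_zero
  set z : ℂ := ((2 * r / π : ℝ) : ℂ) * Complex.I with hzdef
  have hz2 : z ^ 2 = ((-(2 * t / π ^ 2) : ℝ) : ℂ) := by
    rw [hzdef, mul_pow, Complex.I_sq]
    push_cast
    rw [div_pow, mul_pow]
    rw [show ((r:ℂ))^2 = ((t:ℂ)/2) by exact_mod_cast congrArg Complex.ofReal hr2]
    field_simp
  have hπz2 : (π : ℂ) * (z / 2) = (r : ℂ) * Complex.I := by
    rw [hzdef]; push_cast; field_simp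
  have hfact : ∀ k : ℕ, (1 : ℂ) - z ^ 2 / (2 * (k : ℂ) + 1) ^ 2
      = ((1 + (2 * t / π ^ 2) / (2 * (k : ℝ) + 1) ^ 2 : ℝ) : ℂ) := by
    intro k
    rw [hz2]; push_cast; ring
  have hfact2 : ∀ k : ℕ, (1 : ℂ) - (z / 2) ^ 2 / ((k : ℂ) + 1) ^ 2
      = ((1 + (t / 2 / π ^ 2) / ((k : ℝ) + 1) ^ 2 : ℝ) : ℂ) := by
    intro k
    rw [div_pow, hz2]; push_cast; ring
  have hfact2_ne : ∀ k : ℕ, (1 : ℂ) - (z / 2) ^ 2 / ((k : ℂ) + 1) ^ 2 ≠ 0 := by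
    intro k
    rw [hfact2 k]
    refine Complex.ofReal_ne_zero.mpr (ne_of_gt ?_)
    have : 0 < (t / 2 / π ^ 2) / ((k : ℝ) + 1) ^ 2 := by positivity
    linarith
  have hz_ne : z ≠ 0 := by
    rw [hzdef]
    refine mul_ne_zero (Complex.ofReal_ne_zero.mpr ?_) Complex.I_ne_zero
    positivity
  have hsin_ne : Complex.sin ((π : ℂ) * (z / 2)) ≠ 0 := by
    rw [hπz2, Complex.sin_mul_I]
    refine mul_ne_zero ?_ Complex.I_ne_zero
    rw [← Complex.ofReal_sinh]
    exact Complex.ofReal_ne_zero.mpr (ne_of_gt (Real.sinh_pos_iff.mpr hrpos))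
  have hA := Complex.tendsto_euler_sin_prod z
  have hB := Complex.tendsto_euler_sin_prod (z / 2)
  have h2n : Filter.Tendsto (fun n : ℕ => 2 * n) atTop atTop :=
    StrictMono.tendsto_atTop (fun a b h => by omega)
  have hA2 := hA.comp h2n
  have hdiv : Filter.Tendsto (fun n : ℕ =>
      ((π : ℂ) * z * ∏ j ∈ Finset.range (2 * n), ((1 : ℂ) - z ^ 2 / ((j : ℂ) + 1) ^ 2)) /
      (2 * ((π : ℂ) * (z / 2)
        * ∏ j ∈ Finset.range n, ((1 : ℂ) - (z / 2) ^ 2 / ((j : ℂ) + 1) ^ 2))))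
      atTop (nhds (Complex.sin ((π : ℂ) * z) / (2 * Complex.sin ((π : ℂ) * (z / 2))))) :=
    hA2.div (hB.const_mul 2) (mul_ne_zero two_ne_zero hsin_ne)
  have hlim : Complex.sin ((π : ℂ) * z) / (2 * Complex.sin ((π : ℂ) * (z / 2)))
      = ((Real.cosh r : ℝ) : ℂ) := by
    rw [show (π : ℂ) * z = 2 * ((π : ℂ) * (z / 2)) by ring, Complex.sin_two_mul]
    rw [show (2 : ℂ) * Complex.sin ((π : ℂ) * (z / 2)) * Complex.cos ((π : ℂ) * (z / 2))
        / (2 * Complex.sin ((π : ℂ) * (z / 2)))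
      = Complex.cos ((π : ℂ) * (z / 2)) from
        mul_div_cancel_left₀ _ (mul_ne_zero two_ne_zero hsin_ne)]
    rw [hπz2, Complex.cos_mul_I, Complex.ofReal_cosh]
  have hEq : ∀ n : ℕ,
      ((π : ℂ) * z * ∏ j ∈ Finset.range (2 * n), ((1 : ℂ) - z ^ 2 / ((j : ℂ) + 1) ^ 2)) /
      (2 * ((π : ℂ) * (z / 2)
        * ∏ j ∈ Finset.range n, ((1 : ℂ) - (z / 2) ^ 2 / ((j : ℂ) + 1) ^ 2)))
      = ((∏ k ∈ Finset.range n, (1 + (2 * t / π ^ 2) / (2 * (k : ℝ) + 1) ^ 2) : ℝ) : ℂ) := by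
    intro n
    rw [pg_prod_range_two_mul (fun j => (1 : ℂ) - z ^ 2 / ((j : ℂ) + 1) ^ 2)]
    have heven : ∀ k : ℕ, (1 : ℂ) - z ^ 2 / (((2 * k : ℕ) : ℂ) + 1) ^ 2
        = (1 : ℂ) - z ^ 2 / (2 * (k : ℂ) + 1) ^ 2 := by intro k; push_cast; ring_nf
    have hodd : ∀ k : ℕ, (1 : ℂ) - z ^ 2 / (((2 * k + 1 : ℕ) : ℂ) + 1) ^ 2
        = (1 : ℂ) - (z / 2) ^ 2 / ((k : ℂ) + 1) ^ 2 := by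
      intro k; push_cast
      rw [div_pow z 2, div_div]
      congr 2
      ring
    simp only [heven, hodd]
    set T := ∏ k ∈ Finset.range n, ((1:ℂ) - z^2/(2*(k:ℂ)+1)^2) with hT
    set U := ∏ k ∈ Finset.range n, ((1:ℂ) - (z/2)^2/((k:ℂ)+1)^2) with hU
    have hU_ne : U ≠ 0 := Finset.prod_ne_zero_iff.mpr fun j _ => hfact2_ne j
    have hM : (π:ℂ) * z * U ≠ 0 := mul_ne_zero (mul_ne_zero hπ hz_ne) hU_ne
    rw [show 2 * ((π:ℂ) * (z/2) * U) = (π:ℂ) * z * U by ring,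
      show (π:ℂ) * z * (T * U) = T * ((π:ℂ) * z * U) by ring,
      mul_div_cancel_right₀ _ hM]
    rw [hT, Complex.ofReal_prod]
    exact Finset.prod_congr rfl fun k _ => hfact k
  rw [hlim] at hdiv
  have hT : Filter.Tendsto (fun n : ℕ =>
      ((∏ k ∈ Finset.range n, (1 + (2 * t / π ^ 2) / (2 * (k : ℝ) + 1) ^ 2) : ℝ) : ℂ))
      atTop (nhds ((Real.cosh r : ℝ) : ℂ)) := hdiv.congr fun n => hEq n
  have hre := (Complex.continuous_re.tendsto _).comp hT
  simp only [Function.comp, Complex.ofReal_re] at hre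
  exact hre

lemma pg_summable_aux : Summable (fun m : ℕ => 1 / (2 * (m : ℝ) + 1) ^ 2) := by
  have base : Summable (fun n : ℕ => 1 / ((n : ℝ)) ^ 2) :=
    summable_one_div_nat_pow.mpr one_lt_two
  have base1 : Summable (fun n : ℕ => 1 / (((n : ℝ)) + 1) ^ 2) := by
    have := (_root_.summable_nat_add_iff 1).mpr base
    refine this.congr fun n => ?_
    push_cast
    ring_nf
  refine Summable.of_nonneg_of_le (fun m => by positivity) (fun m => ?_) base1
  have h1 : ((m : ℝ) + 1) ^ 2 ≤ (2 * (m : ℝ) + 1) ^ 2 := by nlinarith [Nat.cast_nonneg (α := ℝ) m]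
  have h2 : (0 : ℝ) < ((m : ℝ) + 1) ^ 2 := by positivity
  exact one_div_le_one_div_of_le h2 h1

lemma pg_lintegral_id_expMeasure : ∫⁻ x, ENNReal.ofReal x ∂(expMeasure 1) ≠ ⊤ := by
  have hmeas : Measurable (fun x => (exponentialPDFReal 1 x).toNNReal) :=
    (measurable_exponentialPDFReal 1).real_toNNReal
  have hI : Integrable (fun x : ℝ => x) (expMeasure 1) := by
    rw [show expMeasure 1 = volume.withDensity
        (fun x => ((exponentialPDFReal 1 x).toNNReal : ℝ≥0∞)) from rfl]
    rw [integrable_withDensity_iff_integrable_smul hmeas]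
    have hG := Real.GammaIntegral_convergent (s := 2) two_pos
    have hGi : Integrable
        (Set.indicator (Ioi (0:ℝ)) (fun x => Real.exp (-x) * x ^ ((2:ℝ) - 1))) volume :=
      hG.integrable_indicator measurableSet_Ioi
    refine hGi.congr (Filter.Eventually.of_forall fun x => ?_)
    simp only [NNReal.smul_def, smul_eq_mul]
    rw [Real.coe_toNNReal _ (exponentialPDFReal_nonneg one_pos x)]
    rcases le_or_gt x 0 with hx | hx
    · rw [Set.indicator_of_notMem (by simpa using hx.not_gt)]
      rcases lt_or_eq_of_le hx with hx' | hx'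
      · rw [exponentialPDFReal, gammaPDFReal, if_neg (not_le.mpr hx'), zero_mul]
      · rw [hx', mul_zero]
    · rw [Set.indicator_of_mem (Set.mem_Ioi.mpr hx), exponentialPDFReal, gammaPDFReal,
        if_pos hx.le]
      norm_num [Real.rpow_one, Real.Gamma_one]
  have h2 : (∫⁻ x, ‖x‖ₑ ∂(expMeasure 1)) < ⊤ := hI.2
  exact ne_top_of_le_ne_top h2.ne (lintegral_mono fun x => Real.ofReal_le_enorm x)

end Aux

/-- Let `(E_m)` be i.i.d. exponential rate-1 random variables on a probability space and
`W = (2 / π²) ∑' m, E m / (2m + 1)²` (the PG(1,0) random variable). Then for every `t ≥ 0`,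
the moment generating function of `W` satisfies `E[exp (-t W)] = 1 / cosh (√(t / 2))`. -/
theorem pg_mgf_eq_one_div_cosh
    {Ω : Type*} [MeasurableSpace Ω] (μ : Measure Ω) [IsProbabilityMeasure μ]
    (E : ℕ → Ω → ℝ) (hmeas : ∀ m, Measurable (E m))
    (hindep : iIndepFun E μ)
    (hdist : ∀ m, μ.map (E m) = expMeasure 1)
    (t : ℝ) (ht : 0 ≤ t) :
    ∫ ω, Real.exp (-t * ((2 / π ^ 2) * ∑' m : ℕ, E m ω / (2 * (m : ℝ) + 1) ^ 2)) ∂μ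
      = 1 / Real.cosh (Real.sqrt (t / 2)) := by
  rcases ht.eq_or_lt with rfl | htpos
  · norm_num
  -- notation
  set a : ℝ := 2 * t / π ^ 2 with ha
  have hπpos : (0:ℝ) < π ^ 2 := by positivity
  have hapos : 0 < a := by rw [ha]; positivity
  set X : ℕ → Ω → ℝ := fun m ω => E m ω / (2 * (m : ℝ) + 1) ^ 2 with hX
  have hXmeas : ∀ m, Measurable (X m) := fun m => (hmeas m).div_const _
  have hXindep : iIndepFun X μ :=
    hindep.comp (fun m x => x / (2 * (m : ℝ) + 1) ^ 2)
      (fun m => measurable_id.div_const _)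
  -- per-factor integral
  have hfac : ∀ m : ℕ, ∫ ω, Real.exp (-a * X m ω) ∂μ
      = 1 / (1 + a / (2 * (m : ℝ) + 1) ^ 2) := by
    intro m
    have hs : 0 ≤ a / (2 * (m : ℝ) + 1) ^ 2 := by positivity
    have h1 : ∀ ω, -a * X m ω = -(a / (2 * (m : ℝ) + 1) ^ 2 * E m ω) := by
      intro ω; rw [hX]; field_simp
    simp only [h1]
    have hg : Measurable fun x : ℝ => Real.exp (-(a / (2 * (m : ℝ) + 1) ^ 2 * x)) :=
      ((measurable_const.mul measurable_id).neg).exp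
    have h2 : ∫ x, Real.exp (-(a / (2 * (m : ℝ) + 1) ^ 2 * x)) ∂(μ.map (E m))
        = ∫ ω, Real.exp (-(a / (2 * (m : ℝ) + 1) ^ 2 * E m ω)) ∂μ :=
      integral_map (hmeas m).aemeasurable hg.aestronglyMeasurable
    rw [hdist m] at h2
    rw [← h2]
    exact pg_exp_mgf_aux hs
  -- finite products
  have hkey : ∀ n : ℕ, ∫ ω, Real.exp (-a * ∑ m ∈ Finset.range n, X m ω) ∂μ
      = ∏ m ∈ Finset.range n, (1 / (1 + a / (2 * (m : ℝ) + 1) ^ 2)) := by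
    intro n
    have e1 : ∫ ω, Real.exp (-a * ∑ m ∈ Finset.range n, X m ω) ∂μ
        = mgf (∑ m ∈ Finset.range n, X m) μ (-a) := by
      rw [mgf]
      exact integral_congr_ae (Filter.Eventually.of_forall fun ω => by
        simp [Finset.sum_apply])
    rw [e1, hXindep.mgf_sum hXmeas]
    exact Finset.prod_congr rfl fun m _ => by rw [mgf]; exact hfac m
  -- a.e. nonnegativity
  have hnonneg : ∀ᵐ ω ∂μ, ∀ m, 0 ≤ E m ω := by
    rw [ae_all_iff]
    intro m
    have h0 : μ.map (E m) (Iio 0) = 0 := by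
      rw [hdist m, show expMeasure 1 = volume.withDensity (exponentialPDF 1) from rfl,
        withDensity_apply _ measurableSet_Iio, lintegral_exponentialPDF_of_nonpos le_rfl]
    have hpre : μ (E m ⁻¹' Iio 0) = 0 := by
      rw [← Measure.map_apply (hmeas m) measurableSet_Iio]; exact h0
    rw [ae_iff]
    simpa only [not_le, Set.preimage, Set.mem_Iio] using hpre
  -- a.e. summability
  have hsummable : ∀ᵐ ω ∂μ, Summable (fun m => X m ω) := by
    set C := ∫⁻ x, ENNReal.ofReal x ∂(expMeasure 1) with hC
    have hCm : ∀ m, ∫⁻ ω, ENNReal.ofReal (E m ω) ∂μ = C := by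
      intro m
      rw [hC, ← hdist m, lintegral_map ENNReal.measurable_ofReal (hmeas m)]
    have hXm : ∀ m, ∫⁻ ω, ENNReal.ofReal (X m ω) ∂μ
        = ENNReal.ofReal (1 / (2 * (m : ℝ) + 1) ^ 2) * C := by
      intro m
      have hptw : ∀ ω, ENNReal.ofReal (X m ω)
          = ENNReal.ofReal (1 / (2 * (m : ℝ) + 1) ^ 2) * ENNReal.ofReal (E m ω) := by
        intro ω
        rw [← ENNReal.ofReal_mul (by positivity)]
        congr 1
        rw [hX]; field_simp
      simp_rw [hptw]
      rw [lintegral_const_mul _ (hmeas m).ennreal_ofReal, hCm m]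
    have htot : ∫⁻ ω, ∑' m, ENNReal.ofReal (X m ω) ∂μ ≠ ⊤ := by
      rw [lintegral_tsum (fun m => (hXmeas m).ennreal_ofReal.aemeasurable)]
      simp_rw [hXm]
      rw [ENNReal.tsum_mul_right]
      refine ENNReal.mul_ne_top ?_ pg_lintegral_id_expMeasure
      rw [← ENNReal.ofReal_tsum_of_nonneg (fun m => by positivity) pg_summable_aux]
      exact ENNReal.ofReal_ne_top
    have hmeas_tsum : Measurable fun ω => ∑' m, ENNReal.ofReal (X m ω) :=
      Measurable.ennreal_tsum fun m => (hXmeas m).ennreal_ofReal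
    have hae := ae_lt_top hmeas_tsum htot
    filter_upwards [hae, hnonneg] with ω hω hnn
    have h1 : Summable (fun m => (ENNReal.ofReal (X m ω)).toReal) :=
      ENNReal.summable_toReal hω.ne
    refine h1.congr fun m => ?_
    refine ENNReal.toReal_ofReal ?_
    simp only [hX]
    exact div_nonneg (hnn m) (by positivity)
  -- dominated convergence
  have hDCT : Filter.Tendsto (fun n => ∫ ω, Real.exp (-a * ∑ m ∈ Finset.range n, X m ω) ∂μ)
      atTop (nhds (∫ ω,
        Real.exp (-t * ((2 / π ^ 2) * ∑' m : ℕ, E m ω / (2 * (m : ℝ) + 1) ^ 2)) ∂μ)) := by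
    refine tendsto_integral_of_dominated_convergence (fun _ => (1:ℝ)) ?_ ?_ ?_ ?_
    · intro n
      exact ((Finset.measurable_sum (Finset.range n) (fun m _ => hXmeas m)).const_mul
        (-a)).exp.aestronglyMeasurable
    · exact integrable_const 1
    · intro n
      filter_upwards [hnonneg] with ω hnn
      rw [Real.norm_eq_abs, Real.abs_exp]
      rw [Real.exp_le_one_iff]
      have hsum : 0 ≤ ∑ m ∈ Finset.range n, X m ω :=
        Finset.sum_nonneg fun m _ => by
          simp only [hX]; exact div_nonneg (hnn m) (by positivity)
      nlinarith
    · filter_upwards [hsummable] with ω hsum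
      have h1 : Filter.Tendsto (fun n => ∑ m ∈ Finset.range n, X m ω) atTop
          (nhds (∑' m, X m ω)) := hsum.hasSum.tendsto_sum_nat
      have h2 := ((Real.continuous_exp.comp
        ((continuous_const (y := -a)).mul continuous_id)).tendsto _).comp h1
      simp only [Function.comp, id_eq] at h2
      have harg : -t * (2 / π ^ 2 * ∑' (m : ℕ), E m ω / (2 * (m:ℝ) + 1) ^ 2)
          = -a * ∑' (m : ℕ), E m ω / (2 * (m:ℝ) + 1) ^ 2 := by rw [ha]; ring
      rw [harg]
      simpa only [hX, Function.comp_def, Pi.mul_apply, id_eq] using h2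
  simp only [hkey] at hDCT
  -- the product limit
  have hcosh_pos : 0 < Real.cosh (Real.sqrt (t / 2)) := Real.cosh_pos _
  have hprod := pg_cosh_prod_tendsto htpos
  have hprod' : Filter.Tendsto
      (fun n => ∏ m ∈ Finset.range n, (1 / (1 + a / (2 * (m : ℝ) + 1) ^ 2))) atTop
      (nhds (1 / Real.cosh (Real.sqrt (t / 2)))) := by
    have := (tendsto_const_nhds (x := (1:ℝ))).div hprod hcosh_pos.ne'
    refine this.congr fun n => ?_
    simp only [Pi.div_apply, one_div, ← Finset.prod_inv_distrib, ha]
  exact tendsto_nhds_unique hDCT hprod'
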